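/- For a Laplacian L partitioned by F and T with L_FF invertible, for any vector b in the range of L, the sum of the squared energy of routing the restriction b_F within the block L_FF and the squared energy of routing the projected demand P·b in the Schur complement SC(G,T) equals the squared energy of routing b in G; i.e., (b_F)^T · L_FF^{-1} · b_F + (P·b)^T · SC(G,T)^† · (P·b) = b^T · L^† · b, where P = [−L_TF·L_FF^{-1}, I_T] and † denotes Moore–Penrose pseudoinverse. -/

import Mathlib

open Matrix BigOperators

/-- The Laplacian matrix of a weighted graph given by a weight function `w`. -/
def lap {V : Type*} [Fintype V] [DecidableEq V] (w : V → V → ℝ) : Matrix V V ℝ :=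
  Matrix.diagonal (fun i => ∑ k, w i k) - Matrix.of w

/-- `B` is the Moore–Penrose pseudoinverse of `A`. -/
def IsMoorePenrose {n : Type*} [Fintype n] (A B : Matrix n n ℝ) : Prop :=
  A * B * A = A ∧ B * A * B = B ∧ (A * B)ᵀ = A * B ∧ (B * A)ᵀ = B * A

lemma dot_mulVec_left {n m : Type*} [Fintype n] [Fintype m] (M : Matrix n m ℝ)
    (u : m → ℝ) (v : n → ℝ) : (M *ᵥ u) ⬝ᵥ v = u ⬝ᵥ (Mᵀ *ᵥ v) := by
  rw [Matrix.dotProduct_mulVec, Matrix.vecMul_transpose]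

/-- energy decomposition — the energy of routing `b` equals the energy
of routing `b_F` in the `FF` block plus the energy of routing `P·b` in the Schur
complement. -/
theorem energy_decomposition
    {F T : Type*} [Fintype F] [Fintype T] [DecidableEq F] [DecidableEq T]
    [Nonempty T]
    (w : F ⊕ T → F ⊕ T → ℝ)
    (hsymm : ∀ a b, w a b = w b a) (hnonneg : ∀ a b, 0 ≤ w a b)
    (hconn : ∀ x : F ⊕ T → ℝ, (lap w) *ᵥ x = 0 → ∃ c, ∀ v, x v = c)
    (hFF : IsUnit ((lap w).toBlocks₁₁).det)
    (Ldag : Matrix (F ⊕ T) (F ⊕ T) ℝ) (hLdag : IsMoorePenrose (lap w) Ldag)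
    (SCdag : Matrix T T ℝ)
    (hSCdag : IsMoorePenrose
      ((lap w).toBlocks₂₂ -
        (lap w).toBlocks₂₁ * ((lap w).toBlocks₁₁)⁻¹ * (lap w).toBlocks₁₂) SCdag)
    (b : F ⊕ T → ℝ) (hb : ∃ y, (lap w) *ᵥ y = b) :
    (b ∘ Sum.inl) ⬝ᵥ (((lap w).toBlocks₁₁)⁻¹ *ᵥ (b ∘ Sum.inl))
      + ((Matrix.fromCols (-((lap w).toBlocks₂₁ * ((lap w).toBlocks₁₁)⁻¹)) 1) *ᵥ b)
          ⬝ᵥ (SCdag *ᵥ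
            ((Matrix.fromCols (-((lap w).toBlocks₂₁ * ((lap w).toBlocks₁₁)⁻¹)) 1) *ᵥ b))
      = b ⬝ᵥ (Ldag *ᵥ b) := by
  classical
  obtain ⟨y, hy⟩ := hb
  set L := lap w with hLdef
  set A := L.toBlocks₁₁ with hA
  set B := L.toBlocks₁₂ with hB
  set C := L.toBlocks₂₁ with hC
  set D := L.toBlocks₂₂ with hD
  set S := D - C * A⁻¹ * B with hS
  -- entrywise symmetry of L
  have hLs : ∀ a c, L a c = L c a := by
    intro a c
    simp only [hLdef, lap, Matrix.sub_apply, Matrix.diagonal_apply, Matrix.of_apply,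
      hsymm a c]
    by_cases h : a = c
    · subst h; simp
    · rw [if_neg h, if_neg (Ne.symm h)]
  have hAT : Aᵀ = A := by
    ext i j; simp [hA, Matrix.toBlocks₁₁, hLs (Sum.inl j) (Sum.inl i)]
  have hDT : Dᵀ = D := by
    ext i j; simp [hD, Matrix.toBlocks₂₂, hLs (Sum.inr j) (Sum.inr i)]
  have hBT : Bᵀ = C := by
    ext i j; simp [hB, hC, Matrix.toBlocks₁₂, Matrix.toBlocks₂₁,
      hLs (Sum.inl j) (Sum.inr i)]
  have hCT : Cᵀ = B := by rw [← hBT, Matrix.transpose_transpose]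
  have hAinvT : A⁻¹ᵀ = A⁻¹ := by rw [Matrix.transpose_nonsing_inv, hAT]
  have hAinvA : A⁻¹ * A = 1 := Matrix.nonsing_inv_mul A hFF
  have hST : Sᵀ = S := by
    rw [hS, Matrix.transpose_sub, hDT, Matrix.transpose_mul, Matrix.transpose_mul,
      hAinvT, hCT, hBT, Matrix.mul_assoc]
  set u : F → ℝ := y ∘ Sum.inl with hu
  set v : T → ℝ := y ∘ Sum.inr with hv
  have hye : Sum.elim u v = y := Sum.elim_comp_inl_inr y
  have hLy : L *ᵥ y = Sum.elim (A *ᵥ u + B *ᵥ v) (C *ᵥ u + D *ᵥ v) := by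
    rw [← hye, ← Matrix.fromBlocks_toBlocks L, Matrix.fromBlocks_mulVec]
    simp [hA, hB, hC, hD]
  have hbF : b ∘ Sum.inl = A *ᵥ u + B *ᵥ v := by
    rw [← hy, hLy]; rfl
  have hbT : b ∘ Sum.inr = C *ᵥ u + D *ᵥ v := by
    rw [← hy, hLy]; rfl
  have hbe : Sum.elim (b ∘ Sum.inl) (b ∘ Sum.inr) = b := Sum.elim_comp_inl_inr b
  -- P b = S v
  have key : (C * A⁻¹) *ᵥ (A *ᵥ u) = C *ᵥ u := by
    rw [Matrix.mulVec_mulVec, Matrix.mul_assoc, hAinvA, Matrix.mul_one]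
  have hPb : (Matrix.fromCols (-(C * A⁻¹)) 1) *ᵥ b = S *ᵥ v := by
    rw [← hbe, Matrix.fromCols_mulVec_sumElim, hbF, hbT, Matrix.one_mulVec,
      Matrix.neg_mulVec, Matrix.mulVec_add, key, Matrix.mulVec_mulVec, hS,
      Matrix.sub_mulVec]
    abel
  -- second term equals v ⬝ S v
  have hterm2 : (S *ᵥ v) ⬝ᵥ (SCdag *ᵥ (S *ᵥ v)) = v ⬝ᵥ (S *ᵥ v) := by
    rw [Matrix.mulVec_mulVec, dot_mulVec_left, hST, Matrix.mulVec_mulVec, ← Matrix.mul_assoc, hSCdag.1]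
  -- RHS equals y ⬝ L y
  have hrhs : b ⬝ᵥ (Ldag *ᵥ b) = y ⬝ᵥ (L *ᵥ y) := by
    conv_lhs => rw [← hy]
    rw [Matrix.mulVec_mulVec, dot_mulVec_left, hLdef]
    rw [show (lap w)ᵀ = L by
      ext i j; exact hLs j i]
    rw [Matrix.mulVec_mulVec, ← Matrix.mul_assoc, hLdag.1]
  -- expand both sides
  rw [hrhs, hPb, hterm2, hbF]
  have hexp : A⁻¹ *ᵥ (A *ᵥ u + B *ᵥ v) = u + (A⁻¹ * B) *ᵥ v := by
    rw [Matrix.mulVec_add, Matrix.mulVec_mulVec, Matrix.mulVec_mulVec, hAinvA,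
      Matrix.one_mulVec]
  rw [hexp]
  have hylap : y ⬝ᵥ (L *ᵥ y) =
      u ⬝ᵥ (A *ᵥ u) + u ⬝ᵥ (B *ᵥ v) + (v ⬝ᵥ (C *ᵥ u) + v ⬝ᵥ (D *ᵥ v)) := by
    conv_lhs => rw [hLy, ← hye]
    rw [sumElim_dotProduct_sumElim, dotProduct_add, dotProduct_add]
  rw [hylap]
  have h1 : (A *ᵥ u) ⬝ᵥ u = u ⬝ᵥ (A *ᵥ u) := by
    rw [dot_mulVec_left, hAT]
  have h2 : (A *ᵥ u) ⬝ᵥ ((A⁻¹ * B) *ᵥ v) = u ⬝ᵥ (B *ᵥ v) := by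
    rw [dot_mulVec_left, hAT, Matrix.mulVec_mulVec, ← Matrix.mul_assoc,
      Matrix.mul_nonsing_inv A hFF, Matrix.one_mul]
  have h3 : (B *ᵥ v) ⬝ᵥ u = v ⬝ᵥ (C *ᵥ u) := by
    rw [dot_mulVec_left, hBT]
  have h4 : (B *ᵥ v) ⬝ᵥ ((A⁻¹ * B) *ᵥ v) = v ⬝ᵥ ((C * A⁻¹ * B) *ᵥ v) := by
    rw [dot_mulVec_left, hBT, Matrix.mulVec_mulVec, ← Matrix.mul_assoc]
  have hSv : v ⬝ᵥ (S *ᵥ v) = v ⬝ᵥ (D *ᵥ v) - v ⬝ᵥ ((C * A⁻¹ * B) *ᵥ v) := by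
    rw [hS, Matrix.sub_mulVec, dotProduct_sub]
  rw [hSv, add_dotProduct, dotProduct_add, dotProduct_add, h1, h2, h3, h4]
  ring
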